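/- Let Γ_f = (V, σ, η) be a truncated submodular profit cooperative game. Then the core C(Γ_f) is nonempty if and only if at least one of the following holds: (i) there exists a veto player in Γ_f, or (ii) σ(S) = Σ_{i∈S} σ({i}) for every subset S ⊆ V. -/

import Mathlib

open Finset

/-- Telescoping lemma: removing the elements of `S` from `A` one by one, each
removal costs at least the marginal value at `univ`. -/
lemma tele_aux {V : Type*} [Fintype V] [DecidableEq V]
    (σ : Finset V → ℝ)
    (hsub : ∀ (S T : Finset V) (u : V), S ⊆ T → u ∉ T →
      σ (insert u T) - σ T ≤ σ (insert u S) - σ S) :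
    ∀ S A : Finset V, S ⊆ A →
      σ (A \ S) + ∑ i ∈ S, (σ univ - σ (univ.erase i)) ≤ σ A := by
  intro S
  induction S using Finset.induction with
  | empty => intro A _; simp
  | @insert j S hj ih =>
    intro A hSA
    have hjA : j ∈ A := hSA (mem_insert_self j S)
    have hSA' : S ⊆ A := (subset_insert j S).trans hSA
    have hjB : j ∈ A \ S := mem_sdiff.mpr ⟨hjA, hj⟩
    have hBsub : (A \ S).erase j ⊆ univ.erase j :=
      erase_subset_erase j (subset_univ _)
    have hsubm := hsub ((A \ S).erase j) (univ.erase j) j hBsub (notMem_erase j univ)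
    rw [insert_erase (mem_univ j), insert_erase hjB] at hsubm
    have hAe : A \ insert j S = (A \ S).erase j := by
      ext a
      simp only [mem_sdiff, mem_insert, mem_erase]
      tauto
    rw [sum_insert hj, hAe]
    have := ih A hSA'
    linarith

theorem core_nonempty_iff {V : Type*} [Fintype V] [DecidableEq V] [Nonempty V]
    (σ : Finset V → ℝ) (η : ℝ)
    (hmono : ∀ S T : Finset V, S ⊆ T → σ S ≤ σ T)
    (hsub : ∀ (S T : Finset V) (u : V), S ⊆ T → u ∉ T →
      σ (insert u T) - σ T ≤ σ (insert u S) - σ S)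
    (hempty : σ ∅ = 0) (hη0 : 0 ≤ η) (hη1 : η ≤ σ univ)
    (f : Finset V → ℝ)
    (hf : ∀ S : Finset V, f S = if η ≤ σ S then σ S else 0) :
    (∃ x : V → ℝ, (∑ i, x i) = σ univ ∧ ∀ S : Finset V, f S ≤ ∑ i ∈ S, x i) ↔
      ((∃ i : V, ∀ S : Finset V, i ∉ S → σ S < η) ∨
        (∀ S : Finset V, σ S = ∑ i ∈ S, σ {i})) := by
  have hσ0 : ∀ S : Finset V, 0 ≤ σ S := fun S => by
    have := hmono ∅ S (empty_subset S); linarith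
  constructor
  · rintro ⟨x, hxV, hxS⟩
    by_cases hveto : ∃ i : V, ∀ S : Finset V, i ∉ S → σ S < η
    · exact Or.inl hveto
    · right
      push_neg at hveto
      set c : V → ℝ := fun i => σ univ - σ (univ.erase i) with hc
      -- each x i is bounded by the marginal contribution c i
      have hxc : ∀ i : V, x i ≤ c i := by
        intro i
        obtain ⟨S, hiS, hS⟩ := hveto i
        have hSsub : S ⊆ univ.erase i :=
          subset_erase.mpr ⟨subset_univ S, hiS⟩
        have hηe : η ≤ σ (univ.erase i) := hS.trans (hmono _ _ hSsub)
        have hfe : σ (univ.erase i) ≤ ∑ j ∈ univ.erase i, x j := by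
          have := hxS (univ.erase i)
          rwa [hf, if_pos hηe] at this
        have hsum : ∑ j ∈ univ.erase i, x j + x i = σ univ := by
          rw [← hxV, ← Finset.add_sum_erase univ x (mem_univ i)]; ring
        simp only [hc]
        linarith
      -- total of marginal contributions is at most σ univ
      have htot : ∑ i, c i ≤ σ univ := by
        have := tele_aux σ hsub univ univ (Subset.refl _)
        rwa [sdiff_self, bot_eq_empty, hempty, zero_add] at this
      -- hence equality
      have heq : ∑ i, c i = σ univ := by
        have h1 : σ univ ≤ ∑ i, c i := by
          rw [← hxV]; exact Finset.sum_le_sum fun i _ => hxc i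
        linarith
      -- σ T = ∑_{i ∈ T} c i for all T
      have hT : ∀ T : Finset V, σ T = ∑ i ∈ T, c i := by
        intro T
        have h1 : σ T + ∑ i ∈ univ \ T, c i ≤ σ univ := by
          have := tele_aux σ hsub (univ \ T) univ (subset_univ _)
          rwa [sdiff_sdiff_self_left, univ_inter] at this
        have h2 : ∑ i ∈ T, c i ≤ σ T := by
          have := tele_aux σ hsub T T (Subset.refl _)
          rwa [sdiff_self, bot_eq_empty, hempty, zero_add] at this
        have h3 : ∑ i ∈ univ \ T, c i + ∑ i ∈ T, c i = ∑ i, c i :=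
          Finset.sum_sdiff (subset_univ T)
        linarith
      have hci : ∀ i : V, c i = σ {i} := by
        intro i
        have := hT {i}
        simp only [sum_singleton] at this
        linarith
      intro S
      rw [hT S]
      exact Finset.sum_congr rfl fun i _ => hci i
  · rintro (⟨i, hi⟩ | hadd)
    · refine ⟨fun j => if j = i then σ univ else 0, ?_, ?_⟩
      · simp
      · intro S
        by_cases hiS : i ∈ S
        · have hsum : ∑ j ∈ S, (if j = i then σ univ else 0) = σ univ := by
            rw [Finset.sum_ite_eq' S i (fun _ => σ univ)]
            simp [hiS]
          rw [hsum, hf]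
          split
          · exact hmono S univ (subset_univ S)
          · exact hη0.trans hη1
        · have hsum : ∑ j ∈ S, (if j = i then σ univ else 0) = 0 := by
            apply Finset.sum_eq_zero
            intro j hjS
            have : j ≠ i := fun h => hiS (h ▸ hjS)
            simp [this]
          rw [hsum, hf, if_neg (not_le.mpr (hi S hiS))]
    · refine ⟨fun i => σ {i}, (hadd univ).symm, ?_⟩
      intro S
      rw [← hadd S, hf]
      split
      · exact le_refl _
      · exact hσ0 S
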